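/- Completeness of the Pareto tables: for every iteration ℓ : ℕ and every vertex v : V, if Q is a walk from s to v with at most ℓ edges that is Pareto optimal in the set of all walks from s to v with at most ℓ edges, then cost(Q) ∈ D ℓ v. -/

import Mathlib

open scoped NNReal

/-- A walk from `s` to `t`: a nonempty list of vertices starting at `s`,
ending at `t`, with `E u v` for every pair of consecutive vertices. -/
def IsWalk {V : Type*} (E : V → V → Prop) (s t : V) (l : List V) : Prop :=
  l ≠ [] ∧ l.head? = some s ∧ l.getLast? = some t ∧ l.Chain' E

/-- The multi-cost of a walk: componentwise sum of edge weights over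
consecutive pairs of vertices (a walk with no edges has cost `0`). -/
def walkCost {V : Type*} {k : ℕ} (w : V → V → Fin k → ℝ≥0) (l : List V) :
    Fin k → ℝ≥0 :=
  ((l.zip l.tail).map fun p => w p.1 p.2).sum

/-- The Pareto front: minimal elements of `S` w.r.t. the product order. -/
def paretoFront {k : ℕ} (S : Set (Fin k → ℝ≥0)) : Set (Fin k → ℝ≥0) :=
  {m | m ∈ S ∧ ¬ ∃ c ∈ S, c < m}

lemma walkCost_cons_cons {V : Type*} {k : ℕ} (w : V → V → Fin k → ℝ≥0)
    (a b : V) (l : List V) :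
    walkCost w (a :: b :: l) = w a b + walkCost w (b :: l) := by
  simp [walkCost]

lemma walkCost_append_singleton {V : Type*} {k : ℕ} (w : V → V → Fin k → ℝ≥0) :
    ∀ (l : List V) (u v : V), l.getLast? = some u →
      walkCost w (l ++ [v]) = walkCost w l + w u v := by
  intro l
  induction l with
  | nil => intro u v h; simp at h
  | cons a t ih =>
    intro u v h
    cases t with
    | nil =>
      simp [List.getLast?] at h
      subst h
      simp [walkCost]
    | cons b t' =>
      have hgl : (b :: t').getLast? = some u := by
        rw [List.getLast?_cons_cons] at h; exact h
      have := ih u v hgl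
      show walkCost w (a :: b :: (t' ++ [v])) = _
      rw [walkCost_cons_cons, walkCost_cons_cons]
      rw [show b :: (t' ++ [v]) = (b :: t') ++ [v] from rfl, this, add_assoc]

lemma isWalk_append_singleton {V : Type*} (E : V → V → Prop) (s u v : V)
    (l : List V) (hl : IsWalk E s u l) (he : E u v) :
    IsWalk E s v (l ++ [v]) := by
  obtain ⟨hne, hh, hgl, hc⟩ := hl
  refine ⟨by simp, ?_, ?_, ?_⟩
  · cases l with
    | nil => exact absurd rfl hne
    | cons a t => simpa using hh
  · simp
  · unfold List.Chain'; rw [List.isChain_append]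
    refine ⟨hc, List.isChain_singleton v, ?_⟩
    intro x hx y hy
    simp at hy
    rw [hgl] at hx
    simp at hx
    subst hx; subst hy
    exact he

/-- Soundness helper: every element of the tables is the cost of a walk. -/
lemma paretoTable_sound {V : Type*} [Fintype V]
    (E : V → V → Prop) {k : ℕ} (w : V → V → Fin k → ℝ≥0)
    (s : V) (D : ℕ → V → Set (Fin k → ℝ≥0))
    (hD0s : D 0 s = {0})
    (hD0 : ∀ v : V, v ≠ s → D 0 v = ∅)
    (hDstep : ∀ (ℓ : ℕ) (v : V), D (ℓ + 1) v =
      paretoFront (D ℓ v ∪ {x | ∃ u : V, E u v ∧ ∃ c ∈ D ℓ u, x = c + w u v})) :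
    ∀ (ℓ : ℕ) (v : V) (c : Fin k → ℝ≥0), c ∈ D ℓ v →
      ∃ Q : List V, IsWalk E s v Q ∧ Q.length - 1 ≤ ℓ ∧ walkCost w Q = c := by
  intro ℓ
  induction ℓ with
  | zero =>
    intro v c hc
    by_cases hv : v = s
    · subst hv
      rw [hD0s] at hc
      refine ⟨[v], ⟨by simp, by simp, by simp, List.isChain_singleton v⟩, by simp, ?_⟩
      have hc0 : c = 0 := hc
      simp [walkCost, hc0]
    · rw [hD0 v hv] at hc; exact absurd hc (Set.notMem_empty c)
  | succ ℓ ih =>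
    intro v c hc
    rw [hDstep] at hc
    obtain ⟨hmem, -⟩ := hc
    rcases hmem with h | h
    · obtain ⟨Q, hQ, hlen, hcost⟩ := ih v c h
      exact ⟨Q, hQ, le_trans hlen (Nat.le_succ ℓ), hcost⟩
    · obtain ⟨u, hE, c', hc', rfl⟩ := h
      obtain ⟨P, hP, hlen, hcost⟩ := ih u c' hc'
      refine ⟨P ++ [v], isWalk_append_singleton E s u v P hP hE, ?_, ?_⟩
      · have hne : P ≠ [] := hP.1
        have : 1 ≤ P.length := List.length_pos_iff.mpr hne
        simp only [List.length_append, List.length_singleton]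
        omega
      · rw [walkCost_append_singleton w P u v hP.2.2.1, hcost]

/-- completeness of the Pareto tables: the cost of every walk
from `s` to `v` with at most `ℓ` edges that is Pareto optimal among all such
walks belongs to `D ℓ v`. -/
theorem paretoTable_complete {V : Type*} [Fintype V]
    (E : V → V → Prop) [DecidableRel E] {k : ℕ} (w : V → V → Fin k → ℝ≥0)
    (s : V) (D : ℕ → V → Set (Fin k → ℝ≥0))
    (hD0s : D 0 s = {0})
    (hD0 : ∀ v : V, v ≠ s → D 0 v = ∅)
    (hDstep : ∀ (ℓ : ℕ) (v : V), D (ℓ + 1) v =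
      paretoFront (D ℓ v ∪ {x | ∃ u : V, E u v ∧ ∃ c ∈ D ℓ u, x = c + w u v})) :
    ∀ (ℓ : ℕ) (v : V) (Q : List V),
      IsWalk E s v Q → Q.length - 1 ≤ ℓ →
      (¬ ∃ Q' : List V, (IsWalk E s v Q' ∧ Q'.length - 1 ≤ ℓ) ∧
        walkCost w Q' < walkCost w Q) →
      walkCost w Q ∈ D ℓ v := by
  have sound := paretoTable_sound E w s D hD0s hD0 hDstep
  intro ℓ
  induction ℓ with
  | zero =>
    intro v Q hQ hlen _
    obtain ⟨hne, hh, hgl, -⟩ := hQ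
    have h1 : 1 ≤ Q.length := List.length_pos_iff.mpr hne
    have hlen1 : Q.length = 1 := by omega
    obtain ⟨a, rfl⟩ := List.length_eq_one_iff.mp hlen1
    simp at hh hgl
    subst hh; subst hgl
    rw [hD0s]
    simp [walkCost]
  | succ ℓ ih =>
    intro v Q hQ hlen hopt
    -- helper: membership of the union set gives walks with ≤ ℓ+1 edges
    have hSwalk : ∀ c ∈ (D ℓ v ∪ {x | ∃ u : V, E u v ∧ ∃ c ∈ D ℓ u, x = c + w u v}),
        ∃ Q' : List V, IsWalk E s v Q' ∧ Q'.length - 1 ≤ ℓ + 1 ∧ walkCost w Q' = c := by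
      intro c hc
      rcases hc with h | h
      · obtain ⟨Q', hQ', hlen', hcost'⟩ := sound ℓ v c h
        exact ⟨Q', hQ', le_trans hlen' (Nat.le_succ ℓ), hcost'⟩
      · obtain ⟨u, hE, c', hc', rfl⟩ := h
        obtain ⟨P, hP, hlenP, hcostP⟩ := sound ℓ u c' hc'
        refine ⟨P ++ [v], isWalk_append_singleton E s u v P hP hE, ?_, ?_⟩
        · have : 1 ≤ P.length := List.length_pos_iff.mpr hP.1
          simp only [List.length_append, List.length_singleton]; omega
        · rw [walkCost_append_singleton w P u v hP.2.2.1, hcostP]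
    have hmin : ¬ ∃ c ∈ (D ℓ v ∪ {x | ∃ u : V, E u v ∧ ∃ c ∈ D ℓ u, x = c + w u v}),
        c < walkCost w Q := by
      rintro ⟨c, hc, hlt⟩
      obtain ⟨Q', hQ', hlen', hcost'⟩ := hSwalk c hc
      exact hopt ⟨Q', ⟨hQ', hlen'⟩, hcost' ▸ hlt⟩
    rw [hDstep]
    by_cases hsmall : Q.length - 1 ≤ ℓ
    · -- Q already has ≤ ℓ edges
      have hmemℓ : walkCost w Q ∈ D ℓ v := by
        refine ih v Q hQ hsmall ?_
        rintro ⟨Q', ⟨hQ', hlen'⟩, hlt⟩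
        exact hopt ⟨Q', ⟨hQ', le_trans hlen' (Nat.le_succ ℓ)⟩, hlt⟩
      exact ⟨Or.inl hmemℓ, hmin⟩
    · -- Q has exactly ℓ+1 edges: decompose Q = P ++ [v]
      have hQlen : Q.length = ℓ + 2 := by
        have : 1 ≤ Q.length := List.length_pos_iff.mpr hQ.1
        omega
      obtain ⟨P, z, rfl⟩ : ∃ (P : List V) (z : V), Q = P ++ [z] := by
        rcases List.eq_nil_or_concat Q with h | ⟨P, z, h⟩
        · exact absurd h hQ.1
        · exact ⟨P, z, by simpa using h⟩
      have hPne : P ≠ [] := by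
        intro h; subst h; simp at hQlen
      have hz : v = z := by
        have := hQ.2.2.1; simp at this; exact this.symm
      subst hz
      set u := P.getLast hPne with hu
      have hPgl : P.getLast? = some u := List.getLast?_eq_getLast hPne
      have hchain := hQ.2.2.2
      unfold List.Chain' at hchain; rw [List.isChain_append] at hchain
      obtain ⟨hPc, -, hEuv⟩ := hchain
      have hE : E u v := hEuv u hPgl v rfl
      have hPwalk : IsWalk E s u P := by
        refine ⟨hPne, ?_, hPgl, hPc⟩
        have := hQ.2.1
        cases P with
        | nil => exact absurd rfl hPne
        | cons a t => simpa using this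
      have hPlen : P.length - 1 ≤ ℓ := by
        have : P.length + 1 = ℓ + 2 := by simpa using hQlen
        omega
      have hcostQ : walkCost w (P ++ [v]) = walkCost w P + w u v :=
        walkCost_append_singleton w P u v hPgl
      -- set of costs of walks to u with ≤ ℓ edges, dominated by cost P
      set T : Set (Fin k → ℝ≥0) :=
        {c | (∃ P' : List V, IsWalk E s u P' ∧ P'.length - 1 ≤ ℓ ∧ walkCost w P' = c)
          ∧ c ≤ walkCost w P} with hT
      have hTfin : T.Finite := by
        have : T ⊆ (walkCost w) '' {l : List V | l.length ≤ ℓ + 1} := by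
          rintro c ⟨⟨P', hP', hlen', rfl⟩, -⟩
          have : 1 ≤ P'.length := List.length_pos_iff.mpr hP'.1
          exact ⟨P', by simp only [Set.mem_setOf_eq]; omega, rfl⟩
        exact Set.Finite.subset ((List.finite_length_le V (ℓ + 1)).image _) this
      have hTne : T.Nonempty := ⟨walkCost w P, ⟨P, hPwalk, hPlen, rfl⟩, le_refl _⟩
      obtain ⟨c₀, hc₀T, hc₀min'⟩ := Set.Finite.exists_minimal hTfin hTne
      have hc₀min : ∀ a ∈ T, a ≤ c₀ → c₀ = a := fun a ha hle => le_antisymm (hc₀min' ha hle) hle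
      obtain ⟨⟨P₀, hP₀, hP₀len, hP₀cost⟩, hc₀le⟩ := hc₀T
      -- P₀ is Pareto optimal at level ℓ
      have hc₀mem : c₀ ∈ D ℓ u := by
        rw [← hP₀cost]
        refine ih u P₀ hP₀ hP₀len ?_
        rintro ⟨P', ⟨hP', hlen'⟩, hlt⟩
        rw [hP₀cost] at hlt
        have hP'T : walkCost w P' ∈ T :=
          ⟨⟨P', hP', hlen', rfl⟩, le_trans hlt.le hc₀le⟩
        have := hc₀min (walkCost w P') hP'T hlt.le
        exact absurd this.symm (ne_of_lt hlt)
      -- c₀ + w u v = cost Q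
      have hle : c₀ + w u v ≤ walkCost w (P ++ [v]) := by
        rw [hcostQ]
        exact add_le_add_left hc₀le _
      have heq : c₀ + w u v = walkCost w (P ++ [v]) := by
        by_contra hne
        have hlt : c₀ + w u v < walkCost w (P ++ [v]) := lt_of_le_of_ne hle hne
        have hcQ₀ : walkCost w (P₀ ++ [v]) = c₀ + w u v := by
          rw [walkCost_append_singleton w P₀ u v hP₀.2.2.1, hP₀cost]
        refine hopt ⟨P₀ ++ [v], ⟨isWalk_append_singleton E s u v P₀ hP₀ hE, ?_⟩,
          hcQ₀ ▸ hlt⟩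
        have : 1 ≤ P₀.length := List.length_pos_iff.mpr hP₀.1
        simp only [List.length_append, List.length_singleton]; omega
      refine ⟨Or.inr ⟨u, hE, c₀, hc₀mem, heq.symm⟩, hmin⟩
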